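/- Let T ⊆ ℝⁿ be a convex body, let q_1, …, q_m be a closed generalized billiard trajectory of T with associated outer unit normals n_1, …, n_m (so that, with v_i = (q_{i+1} − q_i)/‖q_{i+1} − q_i‖, one has v_i − v_{i−1} = −λ_i n_i with λ_i > 0 and ⟨x − q_i, n_i⟩ ≤ 0 for all x ∈ T), and let r > 0. Then there is no vector t ∈ ℝⁿ such that q_i + r n_i + t lies in the interior of T + rB for every i = 1, …, m, where B is the closed Euclidean unit ball. -/

import Mathlib

open scoped ENNReal RealInnerProductSpace Pointwise

noncomputable section

variable {E : Type*} [NormedAddCommGroup E] [InnerProductSpace ℝ E]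

/-- The polar body of `K` with respect to the point `z`:
`K^z = {y : ∀ x ∈ K, ⟪x - z, y⟫ ≤ 1}`. -/
def polarBody (K : Set E) (z : E) : Set E :=
  {y | ∀ x ∈ K, ⟪x - z, y⟫ ≤ (1 : ℝ)}

/-- `q : ZMod m → E` is a closed generalized billiard trajectory of `K`:
the `q i` are points of `∂K`, consecutive points are distinct, and at each point the
change of (unit) direction is `-lam • nv` for some `lam > 0` and outer unit normal `nv`
of a supporting hyperplane of `K` at that point. -/
def IsClosedBilliardTraj (K : Set E) {m : ℕ} [NeZero m] (q : ZMod m → E) : Prop :=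
  2 ≤ m ∧ (∀ i, q i ∈ frontier K) ∧ (∀ i : ZMod m, q (i + 1) ≠ q i) ∧
    ∀ i : ZMod m, ∃ (lam : ℝ) (nv : E), 0 < lam ∧ ‖nv‖ = 1 ∧
      (∀ x ∈ K, ⟪x - q i, nv⟫ ≤ (0 : ℝ)) ∧
      ‖q (i + 1) - q i‖⁻¹ • (q (i + 1) - q i)
        - ‖q i - q (i - 1)‖⁻¹ • (q i - q (i - 1)) = -(lam • nv)

/-- The length (perimeter) of a closed polygonal trajectory. -/
def billiardLength {m : ℕ} [NeZero m] (q : ZMod m → E) : ℝ :=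
  ∑ i : ZMod m, ‖q (i + 1) - q i‖

/-- `α(K)`: the infimum of the lengths of the closed generalized billiard trajectories
inside `K`, equal to `∞` if there are none. -/
def alpha (K : Set E) : ℝ≥0∞ :=
  ⨅ (m : ℕ) (_ : NeZero m) (q : ZMod m → E) (_ : IsClosedBilliardTraj K q),
    ENNReal.ofReal (billiardLength q)

/-- The billiard product `β(K) = inf_z α(K) · α(K^z)`. -/
def billiardProduct (K : Set E) : ℝ≥0∞ :=
  ⨅ z : E, alpha K * alpha (polarBody K z)

/-- If `q` is a closed generalized billiard trajectory of the convex body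
`T ⊆ ℝⁿ` with outer unit normals `nv i`, and `r > 0`, then no translate of the configuration
`(q i + r • nv i)` lies in the interior of `T + rB`. -/
theorem no_translation_into_interior {n : ℕ} (T : Set (EuclideanSpace ℝ (Fin n)))
    (hTconv : Convex ℝ T) (hTcomp : IsCompact T) (hTint : (interior T).Nonempty)
    {m : ℕ} [NeZero m] (hm : 2 ≤ m) (q : ZMod m → EuclideanSpace ℝ (Fin n))
    (lam : ZMod m → ℝ) (nv : ZMod m → EuclideanSpace ℝ (Fin n))
    (hfr : ∀ i, q i ∈ frontier T) (hne : ∀ i : ZMod m, q (i + 1) ≠ q i)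
    (hlam : ∀ i, 0 < lam i) (hnv : ∀ i, ‖nv i‖ = 1)
    (hsupp : ∀ i, ∀ x ∈ T, ⟪x - q i, nv i⟫ ≤ (0 : ℝ))
    (hrefl : ∀ i : ZMod m,
      ‖q (i + 1) - q i‖⁻¹ • (q (i + 1) - q i)
        - ‖q i - q (i - 1)‖⁻¹ • (q i - q (i - 1)) = -(lam i • nv i))
    (r : ℝ) (hrpos : 0 < r) :
    ¬ ∃ t : EuclideanSpace ℝ (Fin n), ∀ i : ZMod m,
      q i + r • nv i + t ∈ interior (T + Metric.closedBall 0 r) := by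
  rintro ⟨t, ht⟩
  -- Step 1: each ⟪t, nv i⟫ < 0
  have key : ∀ i : ZMod m, ⟪t, nv i⟫ < 0 := by
    intro i
    have hnhds : interior (T + Metric.closedBall 0 r) ∈
        nhds (q i + r • nv i + t) := isOpen_interior.mem_nhds (ht i)
    obtain ⟨ε, hε, hball⟩ := Metric.mem_nhds_iff.mp hnhds
    set p := q i + r • nv i + t with hp
    have hmem : p + (ε / 2) • nv i ∈ T + Metric.closedBall 0 r := by
      have hn : ‖(ε / 2) • nv i‖ = ε / 2 := by
        rw [norm_smul, hnv i, mul_one, Real.norm_eq_abs,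
          abs_of_pos (by linarith : (0:ℝ) < ε / 2)]
      have : p + (ε / 2) • nv i ∈ Metric.ball p ε := by
        rw [Metric.mem_ball, dist_eq_norm, add_sub_cancel_left, hn]
        linarith
      exact interior_subset (hball this)
    rw [Set.mem_add] at hmem
    obtain ⟨x, hx, b, hb, hxb⟩ := hmem
    have hbnorm : ‖b‖ ≤ r := by
      simpa [Metric.mem_closedBall, dist_zero_right] using hb
    have ht' : t = (x - q i) + b - (r + ε / 2) • nv i := by
      have h : x + b = q i + r • nv i + t + (ε / 2) • nv i := hxb
      linear_combination (norm := module) -h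
    have h1 : ⟪x - q i, nv i⟫ ≤ 0 := hsupp i x hx
    have h2 : ⟪b, nv i⟫ ≤ r := by
      calc ⟪b, nv i⟫ ≤ ‖b‖ * ‖nv i‖ := real_inner_le_norm b (nv i)
        _ = ‖b‖ := by rw [hnv i, mul_one]
        _ ≤ r := hbnorm
    have h3 : ⟪nv i, nv i⟫ = 1 := by
      rw [real_inner_self_eq_norm_sq, hnv i]; norm_num
    rw [ht']
    rw [inner_sub_left, inner_add_left, real_inner_smul_left, h3]
    linarith
  -- Step 2: telescoping sum gives ∑ lam i • nv i = 0
  set v : ZMod m → EuclideanSpace ℝ (Fin n) :=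
    fun i => ‖q (i + 1) - q i‖⁻¹ • (q (i + 1) - q i) with hv
  have hsum : ∑ i : ZMod m, lam i • nv i = 0 := by
    have hterm : ∀ i : ZMod m, lam i • nv i = v (i - 1) - v i := by
      intro i
      have := hrefl i
      have hvi : v i - v (i - 1) = -(lam i • nv i) := by
        simpa [hv, sub_add_cancel] using this
      linear_combination (norm := module) hvi
    calc ∑ i : ZMod m, lam i • nv i = ∑ i : ZMod m, (v (i - 1) - v i) := by
          exact Finset.sum_congr rfl fun i _ => hterm i
      _ = (∑ i : ZMod m, v (i - 1)) - ∑ i : ZMod m, v i := Finset.sum_sub_distrib _ _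
      _ = 0 := by
          rw [Fintype.sum_equiv (Equiv.subRight (1 : ZMod m))
            (fun i => v (i - 1)) v (fun i => rfl)]
          exact sub_self _
  -- Step 3: contradiction
  have h0 : (0 : ℝ) = ∑ i : ZMod m, lam i * ⟪t, nv i⟫ := by
    have : ⟪t, ∑ i : ZMod m, lam i • nv i⟫ = (0 : ℝ) := by
      rw [hsum, inner_zero_right]
    rw [inner_sum] at this
    simp_rw [real_inner_smul_right] at this
    exact this.symm
  have hneg : ∑ i : ZMod m, lam i * ⟪t, nv i⟫ < 0 := by
    have hnonempty : (Finset.univ : Finset (ZMod m)).Nonempty := ⟨0, Finset.mem_univ 0⟩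
    apply Finset.sum_neg (fun i _ => ?_) hnonempty
    exact mul_neg_of_pos_of_neg (hlam i) (key i)
  linarith
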